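/- Let M be a compact (completely continuous) operator on a p-adic Banach space given by an infinite matrix M_∞, and let Mₘ be the finite matrices formed by the first m rows and columns. Then the characteristic power series det(1 − t·Mₘ) converge coefficientwise to det(1 − t·M_∞) as m → ∞. -/

import Mathlib

open Matrix Polynomial Filter

section alg
variable {R : Type*} [CommRing R] {n : Type*} [Fintype n] [DecidableEq n]

lemma det_piecewise_one (A : Matrix n n R) (s : Finset n) :
    (Matrix.of (s.piecewise (fun i j => A i j) (fun i j => (1 : Matrix n n R) i j))).det
      = (A.submatrix (Subtype.val : {x // x ∈ s} → n) Subtype.val).det := by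
  classical
  rw [← Matrix.det_submatrix_equiv_self (Equiv.sumCompl (· ∈ s))]
  have h1 : (Matrix.of (s.piecewise (fun i j => A i j)
        (fun i j => (1 : Matrix n n R) i j))).submatrix
      (Equiv.sumCompl (· ∈ s)) (Equiv.sumCompl (· ∈ s))
      = Matrix.fromBlocks (A.submatrix Subtype.val Subtype.val)
          (A.submatrix Subtype.val Subtype.val) 0 (1 : Matrix {x // x ∉ s} {x // x ∉ s} R) := by
    ext i j
    rcases i with i | i <;> rcases j with j | j <;>
      simp only [Matrix.submatrix_apply, Equiv.sumCompl_apply_inl, Equiv.sumCompl_apply_inr,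
        Matrix.of_apply, Matrix.fromBlocks_apply₁₁, Matrix.fromBlocks_apply₁₂,
        Matrix.fromBlocks_apply₂₁, Matrix.fromBlocks_apply₂₂]
    · rw [s.piecewise_eq_of_mem _ _ i.2]
    · rw [s.piecewise_eq_of_mem _ _ i.2]
    · rw [s.piecewise_eq_of_notMem _ _ i.2]
      have : (i : n) ≠ (j : n) := fun h => i.2 (h ▸ j.2)
      simp [Matrix.one_apply_ne this]
    · rw [s.piecewise_eq_of_notMem _ _ i.2]
      simp [Matrix.one_apply, Subtype.ext_iff]
  rw [h1, Matrix.det_fromBlocks_zero₂₁, Matrix.det_one, mul_one]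

lemma coeff_det_one_sub_X_smul (A : Matrix n n R) (m : ℕ) :
    ((1 - (X : R[X]) • A.map C).det).coeff m
      = (-1 : R) ^ m * ∑ S ∈ Finset.univ.powersetCard m,
          (A.submatrix (Subtype.val : {x // x ∈ S} → n) Subtype.val).det := by
  classical
  set u : n → n → R[X] := fun i => (-X : R[X]) • (A.map C) i with hu
  set v : n → n → R[X] := fun i j => (1 : Matrix n n R[X]) i j with hv
  have hM : (1 - (X : R[X]) • A.map C).det
      = (Matrix.detRowAlternating : (n → R[X]) [⋀^n]→ₗ[R[X]] R[X]).toMultilinearMap (u + v) := by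
    congr 1
    funext i j
    simp [u, v, Matrix.sub_apply, Matrix.smul_apply, sub_eq_neg_add]
  rw [hM, MultilinearMap.map_add_univ]
  have hterm : ∀ s : Finset n,
      (Matrix.detRowAlternating : (n → R[X]) [⋀^n]→ₗ[R[X]] R[X]).toMultilinearMap (s.piecewise u v)
        = (-X : R[X]) ^ s.card • C ((A.submatrix (Subtype.val : {x // x ∈ s} → n) Subtype.val).det) := by
    intro s
    have hpw : s.piecewise u v
        = s.piecewise (fun i => (-X : R[X]) • (s.piecewise (fun i => (A.map C) i) v) i)
            (s.piecewise (fun i => (A.map C) i) v) := by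
      funext i
      by_cases h : i ∈ s
      · rw [s.piecewise_eq_of_mem _ _ h, s.piecewise_eq_of_mem _ _ h, s.piecewise_eq_of_mem _ _ h]
      · simp [s.piecewise_eq_of_notMem _ _ h]
    rw [hpw, MultilinearMap.map_piecewise_smul, Finset.prod_const]
    congr 1
    have heq : (Matrix.detRowAlternating : (n → R[X]) [⋀^n]→ₗ[R[X]] R[X]).toMultilinearMap
          (s.piecewise (fun i => (A.map C) i) v)
        = (Matrix.of (s.piecewise (fun i j => (A.map C) i j)
            (fun i j => (1 : Matrix n n R[X]) i j))).det := rfl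
    rw [heq, det_piecewise_one (A.map C) s, Matrix.submatrix_map, RingHom.map_det,
      RingHom.mapMatrix_apply]
  rw [Finset.sum_congr rfl (fun s _ => hterm s)]
  have hsum : ∀ s : Finset n,
      (((-X : R[X]) ^ s.card • C ((A.submatrix (Subtype.val : {x // x ∈ s} → n) Subtype.val).det)).coeff m)
        = if s.card = m
            then (-1 : R) ^ m * (A.submatrix (Subtype.val : {x // x ∈ s} → n) Subtype.val).det
            else 0 := by
    intro s
    rw [smul_eq_mul]
    have h1 : (-X : R[X]) ^ s.card * C ((A.submatrix (Subtype.val : {x // x ∈ s} → n) Subtype.val).det)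
        = C ((-1 : R) ^ s.card * (A.submatrix (Subtype.val : {x // x ∈ s} → n) Subtype.val).det)
            * X ^ s.card := by
      rw [neg_pow, _root_.map_mul, map_pow, map_neg, Polynomial.C_1]
      ring
    rw [h1, C_mul_X_pow_eq_monomial, coeff_monomial]
    by_cases h : s.card = m
    · subst h
      simp
    · simp [h]
  rw [finset_sum_coeff, Finset.sum_congr rfl (fun s _ => hsum s), Finset.mul_sum,
    Finset.powersetCard_eq_filter, Finset.powerset_univ, Finset.sum_filter]

end alg

section ana
variable {K : Type*} [NontriviallyNormedField K]

lemma norm_sum_lt_of_nonarch (hna : ∀ x y : K, ‖x + y‖ ≤ max ‖x‖ ‖y‖)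
    {α : Type*} {s : Finset α} {g : α → K} {ε : ℝ} (hε : 0 < ε)
    (h : ∀ a ∈ s, ‖g a‖ < ε) : ‖∑ a ∈ s, g a‖ < ε := by
  induction s using Finset.cons_induction with
  | empty => simpa using hε
  | cons a s ha ih =>
    rw [Finset.sum_cons]
    exact lt_of_le_of_lt (hna _ _)
      (max_lt (h a (Finset.mem_cons_self a s))
        (ih fun b hb => h b (Finset.mem_cons.mpr (Or.inr hb))))

lemma norm_det_lt_of_small_row (hna : ∀ x y : K, ‖x + y‖ ≤ max ‖x‖ ‖y‖)
    {ι : Type*} [Fintype ι] [DecidableEq ι] (A : Matrix ι ι K) (i₀ : ι)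
    {δ C' : ℝ} (hδ : 0 < δ) (hC : 1 ≤ C')
    (h1 : ∀ j, ‖A i₀ j‖ < δ) (h2 : ∀ i j, ‖A i j‖ ≤ C') :
    ‖A.det‖ < δ * C' ^ (Fintype.card ι - 1) := by
  have hC0 : 0 < C' := lt_of_lt_of_le one_pos hC
  have hpos : 0 < δ * C' ^ (Fintype.card ι - 1) := mul_pos hδ (pow_pos hC0 _)
  rw [Matrix.det_apply]
  refine norm_sum_lt_of_nonarch hna hpos ?_
  intro σ _
  have hsmul : ‖Equiv.Perm.sign σ • ∏ i, A (σ i) i‖ = ‖∏ i, A (σ i) i‖ := by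
    rcases Int.units_eq_one_or (Equiv.Perm.sign σ) with h | h <;>
      simp [h, Units.smul_def]
  rw [hsmul, norm_prod]
  rw [← Finset.mul_prod_erase Finset.univ _ (Finset.mem_univ (σ⁻¹ i₀))]
  have hj : σ (σ⁻¹ i₀) = i₀ := Equiv.apply_symm_apply σ i₀
  have hP : ∏ j ∈ Finset.univ.erase (σ⁻¹ i₀), ‖A (σ j) j‖ ≤ C' ^ (Fintype.card ι - 1) := by
    calc ∏ j ∈ Finset.univ.erase (σ⁻¹ i₀), ‖A (σ j) j‖
        ≤ ∏ _j ∈ Finset.univ.erase (σ⁻¹ i₀), C' :=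
          Finset.prod_le_prod (fun _ _ => norm_nonneg _) (fun j _ => h2 _ _)
      _ = C' ^ (Fintype.card ι - 1) := by
          rw [Finset.prod_const, Finset.card_erase_of_mem (Finset.mem_univ _), Finset.card_univ]
  calc ‖A (σ (σ⁻¹ i₀)) (σ⁻¹ i₀)‖ * ∏ j ∈ Finset.univ.erase (σ⁻¹ i₀), ‖A (σ j) j‖
      ≤ ‖A (σ (σ⁻¹ i₀)) (σ⁻¹ i₀)‖ * C' ^ (Fintype.card ι - 1) :=
        mul_le_mul_of_nonneg_left hP (norm_nonneg _)
    _ < δ * C' ^ (Fintype.card ι - 1) := by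
        refine mul_lt_mul_of_pos_right ?_ (pow_pos hC0 _)
        rw [hj]; exact h1 _

lemma nonarchAddGroup (hna : ∀ x y : K, ‖x + y‖ ≤ max ‖x‖ ‖y‖) :
    NonarchimedeanAddGroup K := by
  constructor
  intro U hU
  rcases Metric.mem_nhds_iff.mp hU with ⟨ε, hε, hball⟩
  refine ⟨⟨{ carrier := {x | ‖x‖ < ε}
             zero_mem' := by simpa using hε
             add_mem' := fun {a b} ha hb => lt_of_le_of_lt (hna a b) (max_lt ha hb)
             neg_mem' := fun {a} ha => by simpa using ha }, ?_⟩, ?_⟩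
  · have h : {x : K | ‖x‖ < ε} = Metric.ball (0 : K) ε := by
      ext x; simp [Metric.mem_ball, dist_zero_right]
    show IsOpen {x : K | ‖x‖ < ε}
    rw [h]; exact Metric.isOpen_ball
  · intro x hx
    exact hball (by simpa [Metric.mem_ball, dist_zero_right] using (show ‖x‖ < ε from hx))

end ana

lemma det_map_val {K : Type*} [CommRing K] (M : ℕ → ℕ → K) {N : ℕ} (S : Finset (Fin N)) :
    ((Matrix.of fun i j : Fin N => M i j).submatrix
        (Subtype.val : {x // x ∈ S} → Fin N) Subtype.val).det
      = Matrix.det (Matrix.of fun i j : ((S.map Fin.valEmbedding : Finset ℕ) : Finset ℕ) =>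
          M i.1 j.1) := by
  have hlt : ∀ x ∈ S.map Fin.valEmbedding, x < N := by
    intro x hx
    rcases Finset.mem_map.mp hx with ⟨a, _, rfl⟩
    exact a.isLt
  have hmem : ∀ (b : ℕ) (hb : b ∈ S.map Fin.valEmbedding) (h : b < N), (⟨b, h⟩ : Fin N) ∈ S := by
    intro b hb h
    rcases Finset.mem_map.mp hb with ⟨a, ha, rfl⟩
    exact (by exact Fin.ext rfl : a = ⟨(a : ℕ), h⟩) ▸ ha
  let e : {x // x ∈ S} ≃ {x // x ∈ S.map Fin.valEmbedding} :=
    { toFun := fun a => ⟨a.1.1, Finset.mem_map_of_mem _ a.2⟩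
      invFun := fun b => ⟨⟨b.1, hlt b.1 b.2⟩, hmem b.1 b.2 _⟩
      left_inv := fun a => Subtype.ext (Fin.ext rfl)
      right_inv := fun b => Subtype.ext rfl }
  rw [← Matrix.det_submatrix_equiv_self e
    (Matrix.of fun i j : ((S.map Fin.valEmbedding : Finset ℕ) : Finset ℕ) => M i.1 j.1)]
  rfl

lemma det_congr_finset {K : Type*} [CommRing K] (M : ℕ → ℕ → K) {S₁ S₂ : Finset ℕ}
    (h : S₁ = S₂) :
    Matrix.det (Matrix.of fun i j : (S₁ : Finset ℕ) => M i.1 j.1)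
      = Matrix.det (Matrix.of fun i j : (S₂ : Finset ℕ) => M i.1 j.1) := by
  subst h; rfl

/-- Serre: for a compact operator given by an infinite matrix `M` over a complete
nonarchimedean field, the characteristic power series `det(1 - t·Mₘ)` of the finite
truncations converge coefficientwise to the Fredholm determinant `det(1 - t·M_∞)`,
whose `tᵐ`-coefficient is `(-1)^m ∑_{|S|=m} det M_S`. -/
theorem finite_char_series_tendsto_fredholm
    (K : Type*) [NontriviallyNormedField K] [CompleteSpace K]
    (hna : ∀ x y : K, ‖x + y‖ ≤ max ‖x‖ ‖y‖)
    (M : ℕ → ℕ → K)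
    (hbdd : ∃ C : ℝ, ∀ i j : ℕ, ‖M i j‖ ≤ C)
    (hcpt : ∀ ε : ℝ, 0 < ε → ∃ N : ℕ, ∀ i ≥ N, ∀ j : ℕ, ‖M i j‖ < ε) :
    ∀ m : ℕ,
      Tendsto
        (fun N : ℕ =>
          (((1 : Matrix (Fin N) (Fin N) (Polynomial K)) -
              (Polynomial.X : Polynomial K) •
                Matrix.of (fun i j : Fin N => Polynomial.C (M i j))).det.coeff m))
        atTop
        (nhds ((-1 : K) ^ m *
          ∑' S : {S : Finset ℕ // S.card = m},
            Matrix.det (Matrix.of fun i j : (S.1 : Finset ℕ) => M i.1 j.1))) := by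
  intro m
  classical
  obtain ⟨C, hC⟩ := hbdd
  set C' : ℝ := max C 1 with hC'def
  have hC1 : 1 ≤ C' := le_max_right _ _
  have hC0 : 0 < C' := lt_of_lt_of_le one_pos hC1
  letI : NonarchimedeanAddGroup K := nonarchAddGroup hna
  set f : {S : Finset ℕ // S.card = m} → K :=
    fun S => Matrix.det (Matrix.of fun i j : (S.1 : Finset ℕ) => M i.1 j.1) with hf
  have htend0 : Tendsto f cofinite (nhds 0) := by
    rw [NormedAddCommGroup.tendsto_nhds_zero]
    intro ε hε
    rw [Filter.eventually_cofinite]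
    set δ : ℝ := ε / C' ^ m with hδdef
    have hδ : 0 < δ := div_pos hε (pow_pos hC0 m)
    obtain ⟨N, hN⟩ := hcpt δ hδ
    have hfin : {T : {S : Finset ℕ // S.card = m} | T.1 ⊆ Finset.range N}.Finite := by
      have hsub : {T : {S : Finset ℕ // S.card = m} | T.1 ⊆ Finset.range N}
          ⊆ Subtype.val ⁻¹' (((Finset.range N).powerset : Finset (Finset ℕ)) : Set (Finset ℕ)) := by
        intro T hT
        simp only [Set.mem_preimage, Finset.mem_coe, Finset.mem_powerset]
        exact hT
      exact ((((Finset.range N).powerset : Finset (Finset ℕ)).finite_toSet.preimage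
        (Subtype.val_injective.injOn)).subset hsub)
    refine hfin.subset ?_
    intro T hT
    by_contra hsub
    apply hT
    obtain ⟨i₀, hi₀T, hi₀N⟩ : ∃ i₀ ∈ T.1, N ≤ i₀ := by
      rcases Finset.not_subset.mp hsub with ⟨i₀, hi₀, hni⟩
      exact ⟨i₀, hi₀, le_of_not_gt fun h => hni (Finset.mem_range.mpr h)⟩
    have hcard : Fintype.card (T.1 : Finset ℕ) = m := by
      rw [Fintype.card_coe]; exact T.2
    have hlt := norm_det_lt_of_small_row hna
      (Matrix.of fun i j : (T.1 : Finset ℕ) => M i.1 j.1)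
      ⟨i₀, hi₀T⟩ hδ hC1 (fun j => hN i₀ hi₀N j.1)
      (fun i j => le_trans (hC _ _) (le_max_left _ _))
    calc ‖f T‖ < δ * C' ^ (Fintype.card (T.1 : Finset ℕ) - 1) := hlt
      _ ≤ ε := by
        rw [hcard, hδdef, div_mul_eq_mul_div, div_le_iff₀ (pow_pos hC0 m)]
        exact mul_le_mul_of_nonneg_left (pow_le_pow_right₀ hC1 (Nat.sub_le m 1)) hε.le
  have hsummable : Summable f := NonarchimedeanAddGroup.summable_of_tendsto_cofinite_zero htend0
  have hhs : HasSum f (∑' S, f S) := hsummable.hasSum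
  set φ : ℕ → Finset {S : Finset ℕ // S.card = m} :=
    fun N => ((Finset.range N).powersetCard m).subtype (fun T => T.card = m) with hφ
  have hmem_φ : ∀ (N : ℕ) (T : {S : Finset ℕ // S.card = m}),
      T ∈ φ N ↔ T.1 ⊆ Finset.range N := by
    intro N T
    simp only [hφ, Finset.mem_subtype, Finset.mem_powersetCard]
    exact ⟨fun h => h.1, fun h => ⟨h, T.2⟩⟩
  have hmono : Monotone φ := by
    intro a b hab T hT
    rw [hmem_φ] at hT ⊢
    exact hT.trans (Finset.range_subset_range.mpr hab)
  have hexh : ∀ T : {S : Finset ℕ // S.card = m}, ∃ N, T ∈ φ N := by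
    intro T
    obtain ⟨N, hN⟩ := T.1.exists_nat_subset_range
    exact ⟨N, (hmem_φ N T).mpr hN⟩
  have hφtend : Tendsto φ atTop atTop := tendsto_atTop_finset_of_monotone hmono hexh
  have hmain : Tendsto (fun N => ∑ T ∈ φ N, f T) atTop (nhds (∑' S, f S)) := hhs.comp hφtend
  refine Tendsto.congr (fun N => ?_) (hmain.const_mul ((-1 : K) ^ m))
  have hA : Matrix.of (fun i j : Fin N => Polynomial.C (M i j))
      = (Matrix.of fun i j : Fin N => M i j).map Polynomial.C := rfl
  rw [hA, coeff_det_one_sub_X_smul]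
  congr 1
  have hbnd : ∀ (T : {S : Finset ℕ // S.card = m}), T ∈ φ N → ∀ x ∈ T.1, x < N := by
    intro T hT x hx
    exact Finset.mem_range.mp ((hmem_φ N T).mp hT hx)
  refine Finset.sum_bij
    (fun (T : {S : Finset ℕ // S.card = m}) (hT : T ∈ φ N) => T.1.attachFin (hbnd T hT))
    ?_ ?_ ?_ ?_
  · intro T hT
    refine Finset.mem_powersetCard_univ.mpr ?_
    rw [Finset.card_attachFin]
    exact T.2
  · intro T₁ h₁ T₂ h₂ heq
    have heq' : T₁.1.attachFin (hbnd T₁ h₁) = T₂.1.attachFin (hbnd T₂ h₂) := heq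
    apply Subtype.ext
    ext x
    constructor
    · intro hx
      have hx' : x < N := hbnd T₁ h₁ x hx
      have hmem : (⟨x, hx'⟩ : Fin N) ∈ T₁.1.attachFin (hbnd T₁ h₁) :=
        (Finset.mem_attachFin (hbnd T₁ h₁)).mpr hx
      rw [heq'] at hmem
      exact (Finset.mem_attachFin (hbnd T₂ h₂)).mp hmem
    · intro hx
      have hx' : x < N := hbnd T₂ h₂ x hx
      have hmem : (⟨x, hx'⟩ : Fin N) ∈ T₂.1.attachFin (hbnd T₂ h₂) :=
        (Finset.mem_attachFin (hbnd T₂ h₂)).mpr hx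
      rw [← heq'] at hmem
      exact (Finset.mem_attachFin (hbnd T₁ h₁)).mp hmem
  · intro S hS
    have hScard : S.card = m := Finset.mem_powersetCard_univ.mp hS
    refine ⟨⟨S.map Fin.valEmbedding, by rw [Finset.card_map]; exact hScard⟩, ?_, ?_⟩
    · refine (hmem_φ N _).mpr ?_
      intro x hx
      rcases Finset.mem_map.mp hx with ⟨a, _, rfl⟩
      exact Finset.mem_range.mpr a.isLt
    · ext x
      rw [Finset.mem_attachFin]
      constructor
      · intro hx
        rcases Finset.mem_map.mp hx with ⟨a, ha, hax⟩
        exact (Fin.ext hax : a = x) ▸ ha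
      · intro hx
        exact Finset.mem_map.mpr ⟨x, hx, rfl⟩
  · intro T hT
    have hTeq : (T.1.attachFin (hbnd T hT)).map Fin.valEmbedding = T.1 := by
      ext x
      rw [Finset.mem_map]
      constructor
      · rintro ⟨a, ha, rfl⟩
        exact (Finset.mem_attachFin (hbnd T hT)).mp ha
      · intro hx
        exact ⟨⟨x, hbnd T hT x hx⟩, (Finset.mem_attachFin (hbnd T hT)).mpr hx, rfl⟩
    exact ((det_map_val M _).trans (det_congr_finset M hTeq)).symm
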